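/- Let Q = Q₁ × Q₂ with Q₁ ⊆ E₁, Q₂ ⊆ E₂ convex compact sets, and let f : Q₁ × Q₂ → ℝ be convex in its first argument and concave in its second argument. Let δ, δ̃ ≥ 0, L > 0, N ≥ 1, and let ψ_δ : Q × Q → ℝ satisfy: ψ_δ(·, y) convex for every y, ψ_δ(x, x) = 0, and f(u_y, v_x) − f(u_x, v_y) ≤ −ψ_δ(x, y) + δ for all x = (u_x, v_x), y = (u_y, v_y) ∈ Q. Let d be a convex differentiable function on E₁ × E₂ with Bregman divergence V, and let iterates z_k ∈ Q, w_k = (u_k, v_k) ∈ Q and 0 < L_{k+1} ≤ 2·L (k = 0, …, N−1) satisfy: w_k is a δ̃-approximate minimizer on Q of x ↦ ψ_δ(x, z_k) + L_{k+1}·V[z_k](x); z_{k+1} is a δ̃-approximate minimizer on Q of x ↦ ψ_δ(x, w_k) + L_{k+1}·V[z_k](x); and ψ_δ(z_{k+1}, z_k) ≤ ψ_δ(z_{k+1}, w_k) + ψ_δ(w_k, z_k) + L_{k+1}·(V[z_k](w_k) + V[w_k](z_{k+1})) + δ. Then, with S_N := ∑_{k=0}^{N−1} 1/L_{k+1} and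 (û_N, v̂_N) := (1/S_N)·∑_{k=0}^{N−1} w_k/L_{k+1}, (assuming f is continuous so the extrema exist) max_{v ∈ Q₂} f(û_N, v) − min_{u ∈ Q₁} f(u, v̂_N) ≤ (2·L·max_{(u,v) ∈ Q} V[z₀]((u,v)))/N + 2·δ̃ + 2·δ. -/

import Mathlib

open RealInnerProductSpace Finset

/-- The inner product on `E₁ × E₂` induced by the inner products of the factors. -/
noncomputable def ipP {E₁ E₂ : Type*} [NormedAddCommGroup E₁] [InnerProductSpace ℝ E₁]
    [NormedAddCommGroup E₂] [InnerProductSpace ℝ E₂] (x y : E₁ × E₂) : ℝ :=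
  ⟪x.1, y.1⟫ + ⟪x.2, y.2⟫

/-- The Bregman divergence on `E₁ × E₂` generated by `d` with gradient map `Dd`. -/
noncomputable def bregP {E₁ E₂ : Type*} [NormedAddCommGroup E₁] [InnerProductSpace ℝ E₁]
    [NormedAddCommGroup E₂] [InnerProductSpace ℝ E₂]
    (d : E₁ × E₂ → ℝ) (Dd : E₁ × E₂ → E₁ × E₂) (y x : E₁ × E₂) : ℝ :=
  d x - d y - ipP (Dd y) (x - y)

/-- `g` is a subgradient of `ψ` at `z` (relative to `Q`) on the product space. -/
noncomputable def IsSubgradOnP {E₁ E₂ : Type*} [NormedAddCommGroup E₁] [InnerProductSpace ℝ E₁]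
    [NormedAddCommGroup E₂] [InnerProductSpace ℝ E₂]
    (Q : Set (E₁ × E₂)) (ψ : E₁ × E₂ → ℝ) (z g : E₁ × E₂) : Prop :=
  ∀ x ∈ Q, ψ z + ipP g (x - z) ≤ ψ x

/-- `y` is a `δ`-approximate minimizer of `Ψ` on `Q ⊆ E₁ × E₂`. -/
noncomputable def IsApproxMinOnP {E₁ E₂ : Type*}
    [NormedAddCommGroup E₁] [InnerProductSpace ℝ E₁]
    [NormedAddCommGroup E₂] [InnerProductSpace ℝ E₂]
    (Q : Set (E₁ × E₂)) (Ψ : E₁ × E₂ → ℝ) (δ : ℝ) (y : E₁ × E₂) : Prop :=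
  y ∈ Q ∧ ∃ h : E₁ × E₂, IsSubgradOnP Q Ψ y h ∧ ∀ x ∈ Q, -δ ≤ ipP h (x - y)

section Aux
variable {E₁ E₂ : Type*} [NormedAddCommGroup E₁] [InnerProductSpace ℝ E₁]
  [NormedAddCommGroup E₂] [InnerProductSpace ℝ E₂]

lemma ipP_smul_right (g v : E₁ × E₂) (t : ℝ) : ipP g (t • v) = t * ipP g v := by
  simp [ipP, inner_smul_right]; ring

lemma ipP_sub (g a b : E₁ × E₂) : ipP g a - ipP g b = ipP g (a - b) := by
  simp [ipP, inner_sub_right]; ring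

lemma three_point (d : E₁ × E₂ → ℝ) (Dd : E₁ × E₂ → E₁ × E₂) (p a b : E₁ × E₂) :
    ipP (Dd a) (b - a) - ipP (Dd p) (b - a)
      = bregP d Dd p b - bregP d Dd p a - bregP d Dd a b := by
  simp [bregP, ipP, inner_sub_right]; ring

lemma slope_tendsto (d : E₁ × E₂ → ℝ) (Dd : E₁ × E₂ → E₁ × E₂)
    (hd_diff : ∀ p : E₁ × E₂, HasFDerivAt d
      (((innerSL ℝ (Dd p).1).comp (ContinuousLinearMap.fst ℝ E₁ E₂)) +
        ((innerSL ℝ (Dd p).2).comp (ContinuousLinearMap.snd ℝ E₁ E₂))) p)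
    (y v : E₁ × E₂) :
    Filter.Tendsto (fun t : ℝ => (d (y + t • v) - d y) / t) (nhdsWithin 0 (Set.Ioi 0))
      (nhds (ipP (Dd y) v)) := by
  have hg : HasDerivAt (fun t : ℝ => y + t • v) v 0 := by
    simpa using ((hasDerivAt_id (0 : ℝ)).smul_const v).const_add y
  have h0 : y + (0 : ℝ) • v = y := by simp
  have hco : HasDerivAt (fun t : ℝ => d (y + t • v)) (ipP (Dd y) v) 0 := by
    have h := (h0 ▸ hd_diff y).comp_hasDerivAt 0 hg
    convert h using 1
    · rfl
    · rfl
    · rfl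
    simp [ipP]
  have h1 := hco.tendsto_slope_zero
  have h2 : Filter.Tendsto (fun t : ℝ => t⁻¹ • (d (y + (0 + t) • v) - d (y + (0:ℝ) • v)))
      (nhdsWithin 0 (Set.Ioi 0)) (nhds (ipP (Dd y) v)) :=
    h1.mono_left (nhdsWithin_mono 0 (by intro x hx; exact ne_of_gt hx))
  refine h2.congr (fun t => ?_)
  simp [smul_eq_mul, div_eq_inv_mul]

lemma breg_nonneg (d : E₁ × E₂ → ℝ) (Dd : E₁ × E₂ → E₁ × E₂)
    (hd_conv : ConvexOn ℝ Set.univ d)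
    (hd_diff : ∀ p : E₁ × E₂, HasFDerivAt d
      (((innerSL ℝ (Dd p).1).comp (ContinuousLinearMap.fst ℝ E₁ E₂)) +
        ((innerSL ℝ (Dd p).2).comp (ContinuousLinearMap.snd ℝ E₁ E₂))) p)
    (y x : E₁ × E₂) : 0 ≤ bregP d Dd y x := by
  have key : ipP (Dd y) (x - y) ≤ d x - d y := by
    refine le_of_tendsto (slope_tendsto d Dd hd_diff y (x - y)) ?_
    filter_upwards [Ioc_mem_nhdsGT_of_mem (Set.left_mem_Ico.2 one_pos)] with t ht
    have h1 : y + t • (x - y) = (1 - t) • y + t • x := by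
      rw [smul_sub, sub_smul, one_smul]; abel
    have h2 := hd_conv.2 (Set.mem_univ y) (Set.mem_univ x)
      (by linarith [ht.2] : (0:ℝ) ≤ 1 - t) ht.1.le (by ring)
    rw [h1, div_le_iff₀ ht.1]
    simp only [smul_eq_mul] at h2
    nlinarith
  unfold bregP; linarith

lemma subgrad_key (Q : Set (E₁ × E₂)) (hQ : Convex ℝ Q)
    (d : E₁ × E₂ → ℝ) (Dd : E₁ × E₂ → E₁ × E₂)
    (hd_diff : ∀ p : E₁ × E₂, HasFDerivAt d
      (((innerSL ℝ (Dd p).1).comp (ContinuousLinearMap.fst ℝ E₁ E₂)) +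
        ((innerSL ℝ (Dd p).2).comp (ContinuousLinearMap.snd ℝ E₁ E₂))) p)
    (φ : E₁ × E₂ → ℝ) (hφ : ConvexOn ℝ Q φ) (c : ℝ) (p y h : E₁ × E₂) (hy : y ∈ Q)
    (hsub : IsSubgradOnP Q (fun x => φ x + c * bregP d Dd p x) y h)
    (x : E₁ × E₂) (hx : x ∈ Q) :
    φ y + ipP h (x - y)
      - c * (bregP d Dd p x - bregP d Dd p y - bregP d Dd y x) ≤ φ x := by
  have key : ipP h (x - y) - c * (ipP (Dd y) (x - y) - ipP (Dd p) (x - y)) ≤ φ x - φ y := by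
    have hten : Filter.Tendsto
        (fun t : ℝ => φ x - φ y - ipP h (x - y)
          + c * ((d (y + t • (x - y)) - d y) / t - ipP (Dd p) (x - y)))
        (nhdsWithin 0 (Set.Ioi 0))
        (nhds (φ x - φ y - ipP h (x - y)
          + c * (ipP (Dd y) (x - y) - ipP (Dd p) (x - y)))) := by
      exact Filter.Tendsto.const_add _
        (((slope_tendsto d Dd hd_diff y (x - y)).sub_const _).const_mul c)
    have hev : ∀ᶠ t in nhdsWithin (0:ℝ) (Set.Ioi 0), 0 ≤ φ x - φ y - ipP h (x - y)
          + c * ((d (y + t • (x - y)) - d y) / t - ipP (Dd p) (x - y)) := by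
      filter_upwards [Ioc_mem_nhdsGT_of_mem (Set.left_mem_Ico.2 one_pos)] with t ht
      have ht0 : (0:ℝ) < t := ht.1
      have h1 : y + t • (x - y) = (1 - t) • y + t • x := by
        rw [smul_sub, sub_smul, one_smul]; abel
      have hxt : y + t • (x - y) ∈ Q := by
        rw [h1]; exact hQ hy hx (by linarith [ht.2]) ht0.le (by ring)
      have hs := hsub _ hxt
      simp only at hs
      have h2 : ipP h (y + t • (x - y) - y) = t * ipP h (x - y) := by
        rw [add_sub_cancel_left, ipP_smul_right]
      have h3 : φ (y + t • (x - y)) ≤ (1 - t) * φ y + t * φ x := by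
        rw [h1]
        have := hφ.2 hy hx (by linarith [ht.2] : (0:ℝ) ≤ 1 - t) ht0.le (by ring)
        simpa [smul_eq_mul] using this
      have h4 : bregP d Dd p (y + t • (x - y)) - bregP d Dd p y
          = (d (y + t • (x - y)) - d y) - t * ipP (Dd p) (x - y) := by
        unfold bregP
        have : ipP (Dd p) (y + t • (x - y) - p) - ipP (Dd p) (y - p)
            = t * ipP (Dd p) (x - y) := by
          rw [ipP_sub]
          have : y + t • (x - y) - p - (y - p) = t • (x - y) := by abel
          rw [this, ipP_smul_right]
        linarith
      have h4c : c * (bregP d Dd p (y + t • (x - y)) - bregP d Dd p y)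
          = c * ((d (y + t • (x - y)) - d y) - t * ipP (Dd p) (x - y)) := by rw [h4]
      have main : 0 ≤ t * (φ x - φ y - ipP h (x - y))
          + c * ((d (y + t • (x - y)) - d y) - t * ipP (Dd p) (x - y)) := by
        nlinarith [hs, h2, h3, h4c]
      have heq : φ x - φ y - ipP h (x - y)
          + c * ((d (y + t • (x - y)) - d y) / t - ipP (Dd p) (x - y))
          = (t * (φ x - φ y - ipP h (x - y))
          + c * ((d (y + t • (x - y)) - d y) - t * ipP (Dd p) (x - y))) / t := by
        field_simp
      rw [heq]
      positivity
    have hlim := ge_of_tendsto hten hev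
    linarith [hlim]
  rw [← three_point d Dd p y x]
  linarith [key]

end Aux

/-- Theorem 4.16: duality-gap bound for the generalized Mirror-Prox method
applied to a saddle-point problem with a `(δ, L, V)`-model. -/
theorem stmt13
    {E₁ E₂ : Type*} [NormedAddCommGroup E₁] [InnerProductSpace ℝ E₁] [FiniteDimensional ℝ E₁]
    [NormedAddCommGroup E₂] [InnerProductSpace ℝ E₂] [FiniteDimensional ℝ E₂]
    (Q₁ : Set E₁) (Q₂ : Set E₂)
    (hQ₁ : Convex ℝ Q₁) (hQ₂ : Convex ℝ Q₂)
    (hQ₁comp : IsCompact Q₁) (hQ₂comp : IsCompact Q₂)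
    (hQ₁ne : Q₁.Nonempty) (hQ₂ne : Q₂.Nonempty)
    (Q : Set (E₁ × E₂)) (hQdef : Q = Q₁ ×ˢ Q₂)
    (f : E₁ → E₂ → ℝ)
    (hf_cont : Continuous fun p : E₁ × E₂ => f p.1 p.2)
    (hf_convex : ∀ v ∈ Q₂, ConvexOn ℝ Q₁ fun u => f u v)
    (hf_concave : ∀ u ∈ Q₁, ConcaveOn ℝ Q₂ fun v => f u v)
    (d : E₁ × E₂ → ℝ) (Dd : E₁ × E₂ → E₁ × E₂)
    (hd_conv : ConvexOn ℝ Set.univ d)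
    (hd_diff : ∀ p : E₁ × E₂, HasFDerivAt d
      (((innerSL ℝ (Dd p).1).comp (ContinuousLinearMap.fst ℝ E₁ E₂)) +
        ((innerSL ℝ (Dd p).2).comp (ContinuousLinearMap.snd ℝ E₁ E₂))) p)
    (ψδ : E₁ × E₂ → E₁ × E₂ → ℝ)
    (δ δt Lb : ℝ) (hδ : 0 ≤ δ) (hδt : 0 ≤ δt) (hLb : 0 < Lb)
    (hconv : ∀ y ∈ Q, ConvexOn ℝ Q fun x => ψδ x y)
    (hzero : ∀ x ∈ Q, ψδ x x = 0)
    (hsaddle : ∀ x ∈ Q, ∀ y ∈ Q, f y.1 x.2 - f x.1 y.2 ≤ -ψδ x y + δ)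
    (N : ℕ) (hN : 1 ≤ N)
    (z w : ℕ → E₁ × E₂) (L : ℕ → ℝ)
    (hzQ : ∀ k ≤ N, z k ∈ Q) (hwQ : ∀ k < N, w k ∈ Q)
    (hLpos : ∀ k < N, 0 < L (k + 1)) (hLle : ∀ k < N, L (k + 1) ≤ 2 * Lb)
    (hwmin : ∀ k < N,
      IsApproxMinOnP Q (fun x => ψδ x (z k) + L (k + 1) * bregP d Dd (z k) x) δt (w k))
    (hzmin : ∀ k < N,
      IsApproxMinOnP Q (fun x => ψδ x (w k) + L (k + 1) * bregP d Dd (z k) x) δt (z (k + 1)))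
    (hls : ∀ k < N,
      ψδ (z (k + 1)) (z k) ≤ ψδ (z (k + 1)) (w k) + ψδ (w k) (z k)
        + L (k + 1) * (bregP d Dd (z k) (w k) + bregP d Dd (w k) (z (k + 1))) + δ)
    (S : ℝ) (hS : S = ∑ k ∈ Finset.range N, 1 / L (k + 1))
    (wavg : E₁ × E₂)
    (hwavg : wavg = S⁻¹ • ∑ k ∈ Finset.range N, (1 / L (k + 1)) • w k) :
    sSup ((fun v => f wavg.1 v) '' Q₂) - sInf ((fun u => f u wavg.2) '' Q₁) ≤
      2 * Lb * sSup ((fun p => bregP d Dd (z 0) p) '' Q) / N + 2 * δt + 2 * δ := by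
  subst hQdef
  have hQconv : Convex ℝ (Q₁ ×ˢ Q₂) := hQ₁.prod hQ₂
  have hNpos : (0:ℝ) < N := by exact_mod_cast Nat.pos_of_ne_zero (by omega)
  -- per-step inequality (★)
  have step : ∀ k, k < N → ∀ x ∈ Q₁ ×ˢ Q₂,
      -ψδ x (w k) ≤ L (k+1) * (bregP d Dd (z k) x - bregP d Dd (z (k+1)) x)
        + 2*δt + δ := by
    intro k hk x hx
    obtain ⟨hwkQ, hw, hwsub, hwapp⟩ := hwmin k hk
    obtain ⟨hz1Q, hz, hzsub, hzapp⟩ := hzmin k hk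
    have hzkQ := hzQ k hk.le
    have I := subgrad_key _ hQconv d Dd hd_diff (fun x => ψδ x (z k))
      (hconv (z k) hzkQ) (L (k+1)) (z k) (w k) hw hwkQ hwsub (z (k+1)) hz1Q
    have I' := hwapp (z (k+1)) hz1Q
    have II := subgrad_key _ hQconv d Dd hd_diff (fun x => ψδ x (w k))
      (hconv (w k) (hwQ k hk)) (L (k+1)) (z k) (z (k+1)) hz hz1Q hzsub x hx
    have II' := hzapp x hx
    have III := hls k hk
    linarith [I, I', II, II', III]
  -- multiplied and combined with the model property
  have step2 : ∀ k, k < N → ∀ x ∈ Q₁ ×ˢ Q₂,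
      (1 / L (k+1)) * (f (w k).1 x.2 - f x.1 (w k).2) ≤
        (bregP d Dd (z k) x - bregP d Dd (z (k+1)) x) + (2*δt + 2*δ) * (1 / L (k+1)) := by
    intro k hk x hx
    have hL := hLpos k hk
    have h1 := step k hk x hx
    have h2 := hsaddle x hx (w k) (hwQ k hk)
    have h3 : f (w k).1 x.2 - f x.1 (w k).2 ≤
        L (k+1) * (bregP d Dd (z k) x - bregP d Dd (z (k+1)) x) + 2*δt + 2*δ := by
      linarith
    have h4 := mul_le_mul_of_nonneg_left h3 (by positivity : (0:ℝ) ≤ 1 / L (k+1))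
    have h5 : (1 / L (k+1)) * (L (k+1) * (bregP d Dd (z k) x - bregP d Dd (z (k+1)) x)
          + 2*δt + 2*δ)
        = (bregP d Dd (z k) x - bregP d Dd (z (k+1)) x) + (2*δt + 2*δ) * (1 / L (k+1)) := by
      field_simp
      ring
    rw [h5] at h4
    linarith
  -- summed inequality
  have sumineq : ∀ x ∈ Q₁ ×ˢ Q₂,
      ∑ k ∈ range N, (1 / L (k+1)) * (f (w k).1 x.2 - f x.1 (w k).2) ≤
        bregP d Dd (z 0) x + (2*δt + 2*δ) * S := by
    intro x hx
    have h1 : ∑ k ∈ range N, (1 / L (k+1)) * (f (w k).1 x.2 - f x.1 (w k).2) ≤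
        ∑ k ∈ range N, ((bregP d Dd (z k) x - bregP d Dd (z (k+1)) x)
          + (2*δt + 2*δ) * (1 / L (k+1))) :=
      Finset.sum_le_sum (fun k hk => step2 k (mem_range.mp hk) x hx)
    have h2 : ∑ k ∈ range N, ((bregP d Dd (z k) x - bregP d Dd (z (k+1)) x)
          + (2*δt + 2*δ) * (1 / L (k+1)))
        = (bregP d Dd (z 0) x - bregP d Dd (z N) x) + (2*δt + 2*δ) * S := by
      rw [Finset.sum_add_distrib, Finset.sum_range_sub' (fun k => bregP d Dd (z k) x),
        ← Finset.mul_sum, hS]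
    rw [h2] at h1
    have h3 := breg_nonneg d Dd hd_conv hd_diff (z N) x
    linarith
  -- S bounds
  have hsumpos : 0 < ∑ k ∈ range N, 1 / L (k+1) := by
    apply Finset.sum_pos (fun k hk => by
      have := hLpos k (mem_range.mp hk); positivity)
    exact Finset.nonempty_range_iff.mpr (by omega)
  have hSpos : 0 < S := hS ▸ hsumpos
  have hSge : (N:ℝ) / (2*Lb) ≤ S := by
    rw [hS]
    calc (N:ℝ)/(2*Lb) = ∑ _k ∈ range N, 1/(2*Lb) := by
          rw [Finset.sum_const, card_range, nsmul_eq_mul]; ring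
      _ ≤ ∑ k ∈ range N, 1 / L (k+1) :=
          Finset.sum_le_sum (fun k hk =>
            one_div_le_one_div_of_le (hLpos k (mem_range.mp hk)) (hLle k (mem_range.mp hk)))
  -- Jensen
  have hpos' : ∀ k ∈ range N, (0:ℝ) ≤ 1 / L (k+1) := fun k hk =>
    le_of_lt (by have := hLpos k (mem_range.mp hk); positivity)
  have hwavg1 : wavg.1 = (range N).centerMass (fun k => 1 / L (k+1)) (fun k => (w k).1) := by
    rw [hwavg, Finset.centerMass, ← hS]
    simp [Prod.fst_sum]
  have hwavg2 : wavg.2 = (range N).centerMass (fun k => 1 / L (k+1)) (fun k => (w k).2) := by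
    rw [hwavg, Finset.centerMass, ← hS]
    simp [Prod.snd_sum]
  -- sup of Bregman
  set M := sSup ((fun p => bregP d Dd (z 0) p) '' (Q₁ ×ˢ Q₂)) with hM
  have hd_cont : Continuous d := by
    rw [continuous_iff_continuousAt]; exact fun p => (hd_diff p).continuousAt
  have hcB : Continuous fun p : E₁ × E₂ => bregP d Dd (z 0) p := by
    have hsub : Continuous fun p : E₁ × E₂ => p - z 0 := continuous_id.sub continuous_const
    exact (hd_cont.sub continuous_const).sub
      ((Continuous.inner continuous_const (continuous_fst.comp hsub)).add
        (Continuous.inner continuous_const (continuous_snd.comp hsub)))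
  have hbdd : BddAbove ((fun p => bregP d Dd (z 0) p) '' (Q₁ ×ˢ Q₂)) :=
    ((hQ₁comp.prod hQ₂comp).image hcB).bddAbove
  have hM0 : 0 ≤ M := le_csSup hbdd ⟨z 0, hzQ 0 (by omega), by simp [bregP, ipP]⟩
  have hBM : ∀ x ∈ Q₁ ×ˢ Q₂, bregP d Dd (z 0) x ≤ M := fun x hx => le_csSup hbdd ⟨x, hx, rfl⟩
  -- key gap bound
  have key : ∀ x ∈ Q₁ ×ˢ Q₂,
      f wavg.1 x.2 - f x.1 wavg.2 ≤ 2 * Lb * M / N + 2*δt + 2*δ := by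
    intro x hx
    have hmem1 : ∀ k ∈ range N, (w k).1 ∈ Q₁ := fun k hk => (hwQ k (mem_range.mp hk)).1
    have hmem2 : ∀ k ∈ range N, (w k).2 ∈ Q₂ := fun k hk => (hwQ k (mem_range.mp hk)).2
    have jen1 : f wavg.1 x.2 ≤ S⁻¹ * ∑ k ∈ range N, (1 / L (k+1)) * f (w k).1 x.2 := by
      have hj := (hf_convex x.2 hx.2).map_centerMass_le hpos' hsumpos hmem1
      rw [← hwavg1] at hj
      refine hj.trans_eq ?_
      rw [Finset.centerMass, ← hS]
      simp only [smul_eq_mul, Function.comp]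
    have jen2 : S⁻¹ * ∑ k ∈ range N, (1 / L (k+1)) * f x.1 (w k).2 ≤ f x.1 wavg.2 := by
      have hj := (hf_concave x.1 hx.1).le_map_centerMass hpos' hsumpos hmem2
      rw [← hwavg2] at hj
      refine Eq.trans_le ?_ hj
      rw [Finset.centerMass, ← hS]
      simp only [smul_eq_mul, Function.comp]
    have hsplit : S⁻¹ * ∑ k ∈ range N, (1 / L (k+1)) * f (w k).1 x.2
        - S⁻¹ * ∑ k ∈ range N, (1 / L (k+1)) * f x.1 (w k).2
        = S⁻¹ * ∑ k ∈ range N, (1 / L (k+1)) * (f (w k).1 x.2 - f x.1 (w k).2) := by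
      rw [← mul_sub, ← Finset.sum_sub_distrib]
      congr 1
      exact Finset.sum_congr rfl (fun k _ => by ring)
    have hsum := sumineq x hx
    have hS0 : S⁻¹ ≥ 0 := le_of_lt (by positivity)
    have h6 : S⁻¹ * ∑ k ∈ range N, (1 / L (k+1)) * (f (w k).1 x.2 - f x.1 (w k).2)
        ≤ S⁻¹ * (bregP d Dd (z 0) x + (2*δt + 2*δ) * S) :=
      mul_le_mul_of_nonneg_left hsum hS0
    have h7 : S⁻¹ * (bregP d Dd (z 0) x + (2*δt + 2*δ) * S)
        = bregP d Dd (z 0) x * S⁻¹ + 2*δt + 2*δ := by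
      field_simp
      ring
    have h8 : bregP d Dd (z 0) x * S⁻¹ ≤ M * S⁻¹ :=
      mul_le_mul_of_nonneg_right (hBM x hx) hS0
    have h9 : M * S⁻¹ ≤ 2 * Lb * M / N := by
      have hq : (0:ℝ) < (N:ℝ) / (2*Lb) := by positivity
      have h1 : S⁻¹ ≤ ((N:ℝ)/(2*Lb))⁻¹ := inv_anti₀ hq hSge
      have h2 : ((N:ℝ)/(2*Lb))⁻¹ = 2*Lb/N := by rw [inv_div]
      calc M * S⁻¹ ≤ M * (2*Lb/N) :=
            mul_le_mul_of_nonneg_left (h2 ▸ h1) hM0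
        _ = 2 * Lb * M / N := by ring
    linarith [jen1, jen2, hsplit ▸ h6, h7 ▸ (hsplit ▸ h6), h8, h9]
  -- conclude
  rw [sub_le_iff_le_add]
  apply csSup_le (hQ₂ne.image _)
  rintro _ ⟨v, hv, rfl⟩
  have hlow : f wavg.1 v - (2 * Lb * M / N + 2*δt + 2*δ) ≤
      sInf ((fun u => f u wavg.2) '' Q₁) := by
    apply le_csInf (hQ₁ne.image _)
    rintro _ ⟨u, hu, rfl⟩
    have := key (u, v) ⟨hu, hv⟩
    simp only at this
    linarith
  linarith [hlow]
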